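/- Let φ be the Poisson algebra automorphism of (ℂ(x,y), {x,y}=x) given by φ(x) = x and φ(y) = y + λ for λ ∈ ℂ. Then for any a(y), c(y) ∈ ℂ[y] and α ∈ ℂ \ {0}, the diagonal metrics g(y) = [[a(y),0],[0,c(y)]] and g̃(y) = [[α²a(y+λ),0],[0,c(y+λ)]] satisfy g̃ = Aᵀ φ(g) A with A = [[α,0],[0,1]], so the corresponding K\"ahler-Poisson algebras are isomorphic. -/
import Mathlib

open Polynomial Matrix

/-- For the Poisson algebra automorphism of `(ℂ(x,y), {x,y}=x)`
acting on metrics depending on `y` by `a(y) ↦ a(y+λ)`, and any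
`a(y), c(y) ∈ ℂ[y]`, `λ ∈ ℂ`, `α ∈ ℂ \ {0}`, the diagonal metrics
`g(y) = [[a(y),0],[0,c(y)]]` and `g̃(y) = [[α²a(y+λ),0],[0,c(y+λ)]]` satisfy
`g̃ = Aᵀ φ(g) A` with `A = [[α,0],[0,1]]` and `φ(g) = [[a(y+λ),0],[0,c(y+λ)]]`,
so the corresponding Kähler–Poisson algebras are isomorphic. -/
theorem stmt17 (a c : Polynomial ℂ) (lam α : ℂ) (hα : α ≠ 0) :
    (!![C (α ^ 2) * a.comp (X + C lam), 0; 0, c.comp (X + C lam)] :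
        Matrix (Fin 2) (Fin 2) (Polynomial ℂ)) =
      (!![C α, 0; 0, 1] : Matrix (Fin 2) (Fin 2) (Polynomial ℂ))ᵀ *
        !![a.comp (X + C lam), 0; 0, c.comp (X + C lam)] * !![C α, 0; 0, 1] := by
  apply Matrix.ext
  intro i j
  fin_cases i <;> fin_cases j <;>
    simp [Matrix.mul_apply, Fin.sum_univ_two, Matrix.vecHead, Matrix.vecTail, C_pow] <;> ring
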